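/- Let R ⊆ S be an étale ring extension with R Artinian. If R ⊆ S is subintegral (i.e., integral, spectrally bijective, and all residual field extensions κ(Q∩R) → κ(Q) are isomorphisms), then R = S. -/

import Mathlib

open IsLocalRing

/-- If `Ω[A⁄R]` is trivial, `A = R + m` and `algebraMap R A ⁻¹' m` lands in `m ^ 2`,
then `m ≤ m ^ 2`.  Proved by constructing an explicit derivation into `m.Cotangent`. -/
theorem aux_ideal_le_sq_of_subsingleton_kaehler {R A : Type*} [CommRing R] [CommRing A]
    [Algebra R A] (hΩ : Subsingleton (Ω[A⁄R])) (m : Ideal A)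
    (hsec : ∀ a : A, ∃ r : R, a - algebraMap R A r ∈ m)
    (hker : ∀ r : R, algebraMap R A r ∈ m → algebraMap R A r ∈ m ^ 2) :
    m ≤ m ^ 2 := by
  classical
  choose c hc using hsec
  let f : A → m.Cotangent := fun a => m.toCotangent ⟨a - algebraMap R A (c a), hc a⟩
  have hadd : ∀ a b, f (a + b) = f a + f b := by
    intro a b
    show m.toCotangent _ = m.toCotangent _ + m.toCotangent _
    rw [← map_add, Ideal.toCotangent_eq]
    show a + b - algebraMap R A (c (a + b))
        - (a - algebraMap R A (c a) + (b - algebraMap R A (c b))) ∈ m ^ 2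
    have e : a + b - algebraMap R A (c (a + b))
        - (a - algebraMap R A (c a) + (b - algebraMap R A (c b)))
        = algebraMap R A (c a + c b - c (a + b)) := by
      rw [map_sub, map_add]; ring
    rw [e]
    refine hker _ ?_
    rw [← e]
    exact sub_mem (hc (a + b)) (add_mem (hc a) (hc b))
  have halg0 : ∀ r : R, f (algebraMap R A r) = 0 := by
    intro r
    show m.toCotangent _ = 0
    rw [Ideal.toCotangent_eq_zero]
    show algebraMap R A r - algebraMap R A (c (algebraMap R A r)) ∈ m ^ 2
    have e : algebraMap R A r - algebraMap R A (c (algebraMap R A r))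
        = algebraMap R A (r - c (algebraMap R A r)) := by rw [map_sub]
    rw [e]
    refine hker _ ?_
    rw [← e]
    exact hc (algebraMap R A r)
  have hleib : ∀ a b : A, f (a * b) = a • f b + b • f a := by
    intro a b
    have h1 : a • f b + b • f a
        = m.toCotangent (a • ⟨b - algebraMap R A (c b), hc b⟩
            + b • ⟨a - algebraMap R A (c a), hc a⟩) := by
      rw [map_add, map_smul, map_smul]
    rw [h1]
    show m.toCotangent _ = m.toCotangent _
    rw [Ideal.toCotangent_eq]
    show a * b - algebraMap R A (c (a * b))
        - (a • (b - algebraMap R A (c b)) + b • (a - algebraMap R A (c a))) ∈ m ^ 2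
    simp only [smul_eq_mul]
    have e : a * b - algebraMap R A (c (a * b))
        - (a * (b - algebraMap R A (c b)) + b * (a - algebraMap R A (c a)))
        = algebraMap R A (c a * c b - c (a * b))
          - (a - algebraMap R A (c a)) * (b - algebraMap R A (c b)) := by
      rw [map_sub, map_mul]; ring
    rw [e]
    have hmm : (a - algebraMap R A (c a)) * (b - algebraMap R A (c b)) ∈ m ^ 2 := by
      rw [pow_two]
      exact Ideal.mul_mem_mul (hc a) (hc b)
    refine sub_mem (hker _ ?_) hmm
    have e2 : algebraMap R A (c a * c b - c (a * b))
        = (a * b - algebraMap R A (c (a * b)))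
          - (a * (b - algebraMap R A (c b)) + b * (a - algebraMap R A (c a)))
          + (a - algebraMap R A (c a)) * (b - algebraMap R A (c b)) := by
      rw [map_sub, map_mul]; ring
    rw [e2]
    exact add_mem (sub_mem (hc (a * b))
      (add_mem (m.mul_mem_left a (hc b)) (m.mul_mem_left b (hc a))))
      (m.mul_mem_left _ (hc b))
  have hsmul : ∀ (r : R) (a : A), f (r • a) = r • f a := by
    intro r a
    rw [Algebra.smul_def, hleib, halg0, smul_zero, add_zero, algebraMap_smul]
  have hone : f 1 = 0 := by
    have h := halg0 1
    rwa [map_one] at h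
  let D : Derivation R A m.Cotangent :=
    { toFun := f
      map_add' := hadd
      map_smul' := fun r a => by simpa using hsmul r a
      map_one_eq_zero' := hone
      leibniz' := hleib }
  intro x hx
  have hDx : D x = 0 := by
    have h := D.liftKaehlerDifferential_comp_D x
    rw [Subsingleton.elim ((KaehlerDifferential.D R A) x) 0, map_zero] at h
    exact h.symm
  have h1 : m.toCotangent ⟨x, hx⟩ = f x := by
    rw [Ideal.toCotangent_eq]
    show x - (x - algebraMap R A (c x)) ∈ m ^ 2
    have e : x - (x - algebraMap R A (c x)) = algebraMap R A (c x) := by ring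
    rw [e]
    refine hker _ ?_
    rw [← e]
    exact sub_mem hx (hc x)
  have h2 : f x = 0 := hDx
  exact (Ideal.toCotangent_eq_zero _ _).mp (h1.trans h2)

/-- Surjectivity of the residue field extension at a prime `Q` lying over a maximal
ideal gives `S = R + Q`. -/
theorem aux_exists_sub_mem_of_residue_surjective {R S : Type*} [CommRing R] [CommRing S]
    [Algebra R S] (Q : Ideal S) [hQ : Q.IsPrime]
    (hPmax : (Q.comap (algebraMap R S)).IsMaximal)
    [IsLocalHom (Localization.localRingHom (Q.comap (algebraMap R S)) Q (algebraMap R S) rfl)]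
    (hsur : Function.Surjective (IsLocalRing.ResidueField.map
      (Localization.localRingHom (Q.comap (algebraMap R S)) Q (algebraMap R S) rfl)))
    (s : S) : ∃ r : R, s - algebraMap R S r ∈ Q := by
  set P : Ideal R := Q.comap (algebraMap R S) with hPdef
  have hcomm : ∀ a : R,
      (IsLocalRing.ResidueField.map
        (Localization.localRingHom P Q (algebraMap R S) rfl))
        (IsLocalRing.residue _ (algebraMap R (Localization.AtPrime P) a))
      = IsLocalRing.residue _ (algebraMap S (Localization.AtPrime Q) (algebraMap R S a)) := by
    intro a
    rw [IsLocalRing.ResidueField.map_residue, Localization.localRingHom_to_map]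
  -- surjectivity of R → κ(P)
  have hψR : ∀ x : IsLocalRing.ResidueField (Localization.AtPrime P),
      ∃ r : R, IsLocalRing.residue _ (algebraMap R (Localization.AtPrime P) r) = x := by
    intro x
    obtain ⟨z, rfl⟩ := IsLocalRing.residue_surjective x
    obtain ⟨⟨r, t⟩, rfl⟩ := IsLocalization.mk'_surjective P.primeCompl z
    obtain ⟨y, i, hi, hyi⟩ := hPmax.exists_inv t.2
    refine ⟨y * r, ?_⟩
    rw [← sub_eq_zero, ← map_sub, IsLocalRing.residue_eq_zero_iff]
    have hu : IsUnit (algebraMap R (Localization.AtPrime P) (t : R)) :=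
      IsLocalization.map_units _ t
    have h2 : (algebraMap R (Localization.AtPrime P) (y * r)
          - IsLocalization.mk' (Localization.AtPrime P) r t)
        * algebraMap R (Localization.AtPrime P) (t : R)
        = algebraMap R (Localization.AtPrime P) ((y * (t : R) - 1) * r) := by
      rw [sub_mul, IsLocalization.mk'_spec, ← map_mul, ← map_sub]
      ring_nf
    have h3 : algebraMap R (Localization.AtPrime P) ((y * (t : R) - 1) * r)
        ∈ IsLocalRing.maximalIdeal (Localization.AtPrime P) := by
      refine (IsLocalization.AtPrime.to_map_mem_maximal_iff _ P _).mpr ?_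
      refine P.mul_mem_right r ?_
      have : y * (t : R) - 1 = -i := by linear_combination hyi
      rw [this]
      exact neg_mem hi
    rw [← h2] at h3
    exact ((IsLocalRing.maximalIdeal (Localization.AtPrime P)).mul_unit_mem_iff_mem hu).mp h3
  obtain ⟨y0, hy0⟩ := hsur (IsLocalRing.residue _ (algebraMap S (Localization.AtPrime Q) s))
  obtain ⟨r, hr⟩ := hψR y0
  refine ⟨r, ?_⟩
  have h5 : IsLocalRing.residue _ (algebraMap S (Localization.AtPrime Q) s)
      = IsLocalRing.residue _ (algebraMap S (Localization.AtPrime Q) (algebraMap R S r)) := by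
    rw [← hcomm r, hr, hy0]
  have h6 : algebraMap S (Localization.AtPrime Q) (s - algebraMap R S r)
      ∈ IsLocalRing.maximalIdeal (Localization.AtPrime Q) := by
    rw [← IsLocalRing.residue_eq_zero_iff, map_sub, map_sub, sub_eq_zero]
    exact h5
  exact (IsLocalization.AtPrime.to_map_mem_maximal_iff _ Q _).mp h6

/-- A subintegral étale extension of an Artinian ring is trivial: `R = S`. -/
theorem subintegral_etale_eq
    (R S : Type*) [CommRing R] [CommRing S] [Algebra R S] [IsArtinianRing R]
    (hinj : Function.Injective (algebraMap R S))
    [Module.Flat R S] (hfp : Algebra.FinitePresentation R S)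
    (hunr : Subsingleton (Ω[S⁄R]))
    [Algebra.IsIntegral R S]
    (hspec : Function.Bijective (PrimeSpectrum.comap (algebraMap R S)))
    (hres : ∀ (Q : Ideal S) (hQ : Q.IsPrime),
      haveI := hQ
      haveI := Localization.isLocalHom_localRingHom (Q.comap (algebraMap R S)) Q
        (algebraMap R S) rfl
      Function.Bijective (IsLocalRing.ResidueField.map
        (Localization.localRingHom (Q.comap (algebraMap R S)) Q (algebraMap R S) rfl))) :
    Function.Surjective (algebraMap R S) := by
  classical
  haveI := hfp
  haveI : Algebra.FiniteType R S := inferInstance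
  haveI hMF : Module.Finite R S := Algebra.IsIntegral.finite
  haveI : IsArtinianRing S := IsArtinianRing.of_finite R S
  haveI : Algebra.FormallyUnramified R S := ⟨hunr⟩
  -- Key step: for every maximal ideal `P` of `R`, `S = R + P S`.
  have key : ∀ (P : Ideal R), P.IsMaximal →
      ∀ s : S, ∃ r : R, s - algebraMap R S r ∈ P.map (algebraMap R S) := by
    intro P hP s
    obtain ⟨q, hq⟩ := hspec.2 ⟨P, hP.isPrime⟩
    set Q : Ideal S := q.asIdeal with hQdef
    haveI hQp : Q.IsPrime := q.isPrime
    have hQP : Q.comap (algebraMap R S) = P := congrArg PrimeSpectrum.asIdeal hq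
    haveI hPm : (Q.comap (algebraMap R S)).IsMaximal := hQP.symm ▸ hP
    haveI := Localization.isLocalHom_localRingHom (Q.comap (algebraMap R S)) Q
      (algebraMap R S) rfl
    have hQsec : ∀ t : S, ∃ r : R, t - algebraMap R S r ∈ Q :=
      aux_exists_sub_mem_of_residue_surjective Q hPm (hres Q hQp).2
    -- work in `A := S ⧸ P S`
    set I : Ideal S := P.map (algebraMap R S) with hIdef
    have hIQ : I ≤ Q := Ideal.map_le_iff_le_comap.mpr (le_of_eq hQP.symm)
    set A := S ⧸ I with hAdef
    haveI : Algebra.FormallyUnramified R A := Algebra.FormallyUnramified.quotient I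
    have hΩA : Subsingleton (Ω[A⁄R]) :=
      Algebra.FormallyUnramified.subsingleton_kaehlerDifferential
    set m : Ideal A := Q.map (Ideal.Quotient.mk I) with hmdef
    have halg : ∀ r : R, algebraMap R A r = Ideal.Quotient.mk I (algebraMap R S r) :=
      fun r => rfl
    -- section
    have hsec : ∀ a : A, ∃ r : R, a - algebraMap R A r ∈ m := by
      intro a
      obtain ⟨t, rfl⟩ := Ideal.Quotient.mk_surjective (I := I) a
      obtain ⟨r, hr⟩ := hQsec t
      refine ⟨r, ?_⟩
      rw [halg, ← map_sub]
      exact Ideal.mem_map_of_mem _ hr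
    -- kernel condition
    have hker : ∀ r : R, algebraMap R A r ∈ m → algebraMap R A r ∈ m ^ 2 := by
      intro r hrm
      rw [halg] at hrm ⊢
      have h1 : algebraMap R S r ∈ Q := (Ideal.mem_quotient_iff_mem hIQ).mp hrm
      have h2 : r ∈ P := by rw [← hQP]; exact h1
      have h3 : algebraMap R S r ∈ I := Ideal.mem_map_of_mem _ h2
      rw [Ideal.Quotient.eq_zero_iff_mem.mpr h3]
      exact zero_mem _
    have hm2 : m ≤ m ^ 2 := aux_ideal_le_sq_of_subsingleton_kaehler hΩA m hsec hker
    -- `m` is contained in every prime of `A`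
    have hmle : ∀ (p : Ideal A), p.IsPrime → m ≤ p := by
      intro p hp
      haveI := hp
      set Q' : Ideal S := p.comap (Ideal.Quotient.mk I) with hQ'def
      haveI hQ'p : Q'.IsPrime := Ideal.IsPrime.comap _
      haveI hQ'cp : (Q'.comap (algebraMap R S)).IsPrime := Ideal.IsPrime.comap _
      have hPQ' : P ≤ Q'.comap (algebraMap R S) := by
        intro r hr
        have h0 : algebraMap R S r ∈ I := Ideal.mem_map_of_mem _ hr
        have h1 : Ideal.Quotient.mk I (algebraMap R S r) = 0 :=
          Ideal.Quotient.eq_zero_iff_mem.mpr h0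
        show algebraMap R S r ∈ Q'
        show Ideal.Quotient.mk I (algebraMap R S r) ∈ p
        rw [h1]
        exact zero_mem p
      have hQ'P : Q'.comap (algebraMap R S) = P :=
        (hP.eq_of_le hQ'cp.ne_top hPQ').symm
      have : (⟨Q', hQ'p⟩ : PrimeSpectrum S) = ⟨Q, hQp⟩ := by
        apply hspec.1
        rw [hq]
        exact PrimeSpectrum.ext hQ'P
      have hQ'Q : Q' = Q := congrArg PrimeSpectrum.asIdeal this
      have : m = p := by
        rw [hmdef, ← hQ'Q, hQ'def,
          Ideal.map_comap_of_surjective _ Ideal.Quotient.mk_surjective]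
      exact le_of_eq this
    -- `m` is nilpotent
    haveI : IsArtinianRing A :=
      (Ideal.Quotient.mk_surjective (I := I)).isArtinianRing
    have hmnil : m ≤ Ideal.jacobson (⊥ : Ideal A) :=
      le_sInf fun p hp => hmle p hp.2.isPrime
    obtain ⟨n, hn⟩ := IsArtinianRing.isNilpotent_jacobson_bot (R := A)
    have hmpow : ∀ k : ℕ, m ≤ m ^ (k + 1) := by
      intro k
      induction k with
      | zero => rw [pow_one]
      | succ k ih =>
        calc m ≤ m ^ 2 := hm2
        _ = m * m := by rw [pow_two]
        _ ≤ m ^ (k + 1) * m := Ideal.mul_mono_left ih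
        _ = m ^ (k + 2) := by ring
    have hmbot : m = ⊥ := by
      have h1 : m ≤ Ideal.jacobson (⊥ : Ideal A) ^ (n + 1) := by
        calc m ≤ m ^ (n + 1) := hmpow n
        _ ≤ Ideal.jacobson (⊥ : Ideal A) ^ (n + 1) := Ideal.pow_right_mono hmnil _
      have h2 : Ideal.jacobson (⊥ : Ideal A) ^ (n + 1) = ⊥ := by
        rw [pow_succ, hn, zero_mul]
        rfl
      exact le_bot_iff.mp (h1.trans_eq h2)
    -- conclude
    obtain ⟨r, hr⟩ := hsec (Ideal.Quotient.mk I s)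
    refine ⟨r, ?_⟩
    rw [hmbot] at hr
    rw [halg, ← map_sub] at hr
    exact Ideal.Quotient.eq_zero_iff_mem.mp (Submodule.mem_bot _ |>.mp hr)
  -- Nakayama-type argument using nilpotency of the Jacobson radical
  set N : Submodule R S := LinearMap.range (Algebra.linearMap R S) with hNdef
  have hstep : ∀ (P : Ideal R), P.IsMaximal → (⊤ : Submodule R S) ≤ N ⊔ P • ⊤ := by
    intro P hP s _
    obtain ⟨r, hr⟩ := key P hP s
    refine Submodule.mem_sup.mpr ⟨algebraMap R S r, ⟨r, rfl⟩, s - algebraMap R S r, ?_, by ring⟩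
    rw [Ideal.smul_top_eq_map]
    exact hr
  have hfin := IsArtinianRing.setOfPred_isMaximal_finite R
  set t : Finset (Ideal R) := hfin.toFinset with htdef
  have hprod : ∀ (u : Finset (Ideal R)), (∀ P ∈ u, P.IsMaximal) →
      (⊤ : Submodule R S) ≤ N ⊔ (∏ P ∈ u, P) • ⊤ := by
    intro u
    induction u using Finset.induction_on with
    | empty =>
      intro _
      rw [Finset.prod_empty, Ideal.one_eq_top, Submodule.top_smul]
      exact le_sup_right
    | insert _ _ ha ih =>
      rename_i a u'
      intro hmax
      have h1 := ih fun P hP => hmax P (Finset.mem_insert_of_mem hP)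
      have h2 := hstep a (hmax a (Finset.mem_insert_self a u'))
      calc (⊤ : Submodule R S) ≤ N ⊔ (∏ P ∈ u', P) • ⊤ := h1
      _ ≤ N ⊔ (∏ P ∈ u', P) • (N ⊔ a • ⊤) :=
        sup_le_sup_left (smul_mono_right _ h2) N
      _ = N ⊔ ((∏ P ∈ u', P) • N ⊔ (∏ P ∈ u', P) • a • ⊤) := by rw [Submodule.smul_sup]
      _ ≤ N ⊔ (N ⊔ (∏ P ∈ insert a u', P) • ⊤) := by
        refine sup_le_sup_left (sup_le_sup Submodule.smul_le_right (le_of_eq ?_)) N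
        rw [← Submodule.smul_assoc, Ideal.smul_eq_mul, Finset.prod_insert ha, mul_comm]
      _ = N ⊔ (∏ P ∈ insert a u', P) • ⊤ := by rw [← sup_assoc, sup_idem]
  have ht : (⊤ : Submodule R S) ≤ N ⊔ (∏ P ∈ t, P) • ⊤ :=
    hprod t fun P hP => (hfin.mem_toFinset.mp hP)
  have hJ : (∏ P ∈ t, P) ≤ Ideal.jacobson ⊥ := by
    refine le_sInf fun J hJ => ?_
    obtain ⟨-, hJm⟩ := hJ
    exact le_trans Ideal.prod_le_inf (Finset.inf_le (hfin.mem_toFinset.mpr hJm))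
  obtain ⟨n, hn⟩ := IsArtinianRing.isNilpotent_jacobson_bot (R := R)
  have hpow : ∀ k : ℕ, (⊤ : Submodule R S) ≤ N ⊔ ((∏ P ∈ t, P) ^ (k + 1)) • ⊤ := by
    intro k
    induction k with
    | zero => rw [pow_one]; exact ht
    | succ k ih =>
      calc (⊤ : Submodule R S) ≤ N ⊔ ((∏ P ∈ t, P) ^ (k + 1)) • ⊤ := ih
      _ ≤ N ⊔ ((∏ P ∈ t, P) ^ (k + 1)) • (N ⊔ (∏ P ∈ t, P) • ⊤) :=
        sup_le_sup_left (smul_mono_right _ ht) N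
      _ = N ⊔ (((∏ P ∈ t, P) ^ (k + 1)) • N
          ⊔ ((∏ P ∈ t, P) ^ (k + 1)) • (∏ P ∈ t, P) • ⊤) := by rw [Submodule.smul_sup]
      _ ≤ N ⊔ (N ⊔ ((∏ P ∈ t, P) ^ (k + 2)) • ⊤) := by
        refine sup_le_sup_left (sup_le_sup Submodule.smul_le_right (le_of_eq ?_)) N
        rw [← Submodule.smul_assoc, Ideal.smul_eq_mul, ← pow_succ]
      _ = N ⊔ ((∏ P ∈ t, P) ^ (k + 2)) • ⊤ := by rw [← sup_assoc, sup_idem]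
  have hNtop : N = ⊤ := by
    have h1 : ((∏ P ∈ t, P) ^ (n + 1)) ≤ ⊥ := by
      calc ((∏ P ∈ t, P) ^ (n + 1)) ≤ (Ideal.jacobson ⊥) ^ (n + 1) :=
        Ideal.pow_right_mono hJ _
      _ = ⊥ := by rw [pow_succ, hn, zero_mul]; rfl
    have h2 : ((∏ P ∈ t, P) ^ (n + 1)) • (⊤ : Submodule R S) ≤ ⊥ • (⊤ : Submodule R S) :=
      Submodule.smul_mono_left h1
    rw [Submodule.bot_smul] at h2
    refine top_le_iff.mp ?_
    calc (⊤ : Submodule R S) ≤ N ⊔ ((∏ P ∈ t, P) ^ (n + 1)) • ⊤ := hpow n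
    _ ≤ N ⊔ ⊥ := sup_le_sup_left h2 N
    _ = N := by rw [sup_bot_eq]
  intro s
  have hs : s ∈ N := hNtop ▸ Submodule.mem_top
  obtain ⟨r, hr⟩ := hs
  exact ⟨r, by simpa using hr⟩
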